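/- The symmetric inverse monoid I_ℕ, with the Polish semigroup topology 𝒯 generated by the sets U_{x,y} = {h : (x,y) ∈ h} and W_x = {h : x ∉ dom(h)}, embeds topologically into ℕ^ℕ via the map sending g to the total function that sends x+1 to g(x)+1 when x ∈ dom(g), sends x+1 to 0 when x ∉ dom(g), and sends 0 to 0. -/
import Mathlib


/-- A partial bijection of `ℕ`, encoded as its graph: a functional and
co-functional relation. -/
def IsPartialBij (R : Set (ℕ × ℕ)) : Prop :=
  (∀ x y y', (x, y) ∈ R → (x, y') ∈ R → y = y') ∧
  (∀ x x' y, (x, y) ∈ R → (x', y) ∈ R → x = x')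

/-- The symmetric inverse monoid `I_ℕ` of all partial bijections between
subsets of `ℕ`. -/
def IN : Type := {R : Set (ℕ × ℕ) // IsPartialBij R}

/-- Left-to-right composition of partial bijections. -/
instance : Mul IN :=
  ⟨fun f g => ⟨{p | ∃ y, (p.1, y) ∈ f.1 ∧ (y, p.2) ∈ g.1}, by
    obtain ⟨f, hf1, hf2⟩ := f; obtain ⟨g, hg1, hg2⟩ := g
    constructor
    · rintro x y y' ⟨a, ha1, ha2⟩ ⟨b, hb1, hb2⟩
      cases hf1 x a b ha1 hb1
      exact hg1 a y y' ha2 hb2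
    · rintro x x' y ⟨a, ha1, ha2⟩ ⟨b, hb1, hb2⟩
      cases hg2 a b y ha2 hb2
      exact hf2 x x' a ha1 hb1⟩⟩

/-- The Polish semigroup topology `𝒯` on `I_ℕ`, generated by the sets
`U_{x,y} = {h | (x,y) ∈ h}` and `W_x = {h | x ∉ dom h}` only. -/
instance : TopologicalSpace IN :=
  TopologicalSpace.generateFrom
    ({A | ∃ x y : ℕ, A = {h : IN | (x, y) ∈ h.1}} ∪
     {A | ∃ x : ℕ, A = {h : IN | ∀ y, (x, y) ∉ h.1}})

/-- `(I_ℕ, 𝒯)` embeds topologically into `ℕ^ℕ` (functions under left-to-right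
composition, product topology) via the map sending `g` to the total function
that sends `x+1` to `g(x)+1` when `x ∈ dom g`, sends `x+1` to `0` when
`x ∉ dom g`, and sends `0` to `0`. -/
theorem IN_T2_embeds_into_NN (F : IN → (ℕ → ℕ))
    (hF0 : ∀ g : IN, F g 0 = 0)
    (hFdef : ∀ g : IN, ∀ x y : ℕ, (x, y) ∈ g.1 → F g (x + 1) = y + 1)
    (hFundef : ∀ g : IN, ∀ x : ℕ, (∀ y, (x, y) ∉ g.1) → F g (x + 1) = 0) :
    Function.Injective F ∧ (∀ a b : IN, F (a * b) = F b ∘ F a) ∧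
      Topology.IsEmbedding F := by
  classical
  have key0 : ∀ (g : IN) (x : ℕ), F g (x + 1) = 0 ↔ ∀ y, (x, y) ∉ g.1 := by
    intro g x
    constructor
    · intro h y hy
      rw [hFdef g x y hy] at h
      exact Nat.succ_ne_zero y h
    · exact hFundef g x
  have key1 : ∀ (g : IN) (x y : ℕ), F g (x + 1) = y + 1 ↔ (x, y) ∈ g.1 := by
    intro g x y
    constructor
    · intro h
      by_cases hx : ∀ y', (x, y') ∉ g.1
      · rw [hFundef g x hx] at h
        exact absurd h.symm (Nat.succ_ne_zero y)
      · push_neg at hx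
        obtain ⟨y', hy'⟩ := hx
        rw [hFdef g x y' hy'] at h
        obtain rfl := Nat.succ_injective h
        exact hy'
    · exact hFdef g x y
  have hinj : Function.Injective F := by
    intro a b hab
    apply Subtype.ext
    ext ⟨x, y⟩
    rw [← key1 a x y, ← key1 b x y, hab]
  have hhom : ∀ a b : IN, F (a * b) = F b ∘ F a := by
    intro a b
    funext n
    cases n with
    | zero => simp [hF0]
    | succ x =>
      show F (a * b) (x + 1) = F b (F a (x + 1))
      by_cases ha : ∃ y, (x, y) ∈ a.1
      · obtain ⟨y, hy⟩ := ha
        rw [hFdef a x y hy]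
        by_cases hb : ∃ z, (y, z) ∈ b.1
        · obtain ⟨z, hz⟩ := hb
          rw [hFdef b y z hz]
          exact hFdef (a * b) x z ⟨y, hy, hz⟩
        · push_neg at hb
          rw [hFundef b y hb]
          apply hFundef (a * b) x
          rintro z ⟨w, hw1, hw2⟩
          obtain rfl := a.2.1 x w y hw1 hy
          exact hb z hw2
      · push_neg at ha
        rw [hFundef a x ha, hF0]
        apply hFundef (a * b) x
        rintro z ⟨w, hw1, _⟩
        exact ha w hw1
  have hsingle : ∀ (n k : ℕ), IsOpen {g : IN | F g n = k} := by
    intro n k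
    cases n with
    | zero =>
      rcases Nat.eq_zero_or_pos k with rfl | hk
      · have : {g : IN | F g 0 = 0} = Set.univ := by
          ext g; simp [hF0]
        rw [this]; exact isOpen_univ
      · have : {g : IN | F g 0 = k} = ∅ := by
          ext g; simp [hF0]; omega
        rw [this]; exact isOpen_empty
    | succ x =>
      cases k with
      | zero =>
        have : {g : IN | F g (x + 1) = 0} = {h : IN | ∀ y, (x, y) ∉ h.1} := by
          ext g; exact key0 g x
        rw [this]
        exact TopologicalSpace.isOpen_generateFrom_of_mem (Or.inr ⟨x, rfl⟩)
      | succ y =>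
        have : {g : IN | F g (x + 1) = y + 1} = {h : IN | (x, y) ∈ h.1} := by
          ext g; exact key1 g x y
        rw [this]
        exact TopologicalSpace.isOpen_generateFrom_of_mem (Or.inl ⟨x, y, rfl⟩)
  have hcont : Continuous F := by
    rw [continuous_pi_iff]
    intro n
    rw [continuous_def]
    intro s _
    have : (fun g => F g n) ⁻¹' s = ⋃ k ∈ s, {g : IN | F g n = k} := by
      ext g; simp
    rw [this]
    exact isOpen_biUnion fun k _ => hsingle n k
  refine ⟨hinj, hhom, ⟨⟨le_antisymm (continuous_iff_le_induced.mp hcont) ?_⟩, hinj⟩⟩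
  apply le_generateFrom
  rintro s (⟨x, y, rfl⟩ | ⟨x, rfl⟩)
  · refine ⟨(fun f : ℕ → ℕ => f (x + 1)) ⁻¹' {y + 1},
      (continuous_apply (x + 1)).isOpen_preimage _ (isOpen_discrete _), ?_⟩
    ext g
    simpa using key1 g x y
  · refine ⟨(fun f : ℕ → ℕ => f (x + 1)) ⁻¹' {0},
      (continuous_apply (x + 1)).isOpen_preimage _ (isOpen_discrete _), ?_⟩
    ext g
    simpa using key0 g x
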